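/- If a(n) ≤ b(n) for all n, then any t-collision instance h : [(a(n)−1)·N + 1] → [N] can be extended to a map h' : [(b(n)−1)·N + 1] → [N] by adding (b(n)−a(n))·N dummy pigeons, with each group of N dummy pigeons mapped bijectively to the N holes, such that every b(n)-collision in h' contains at least a(n) pigeons that are original (non-dummy) and hence yields an a(n)-collision in h. -/

import Mathlib

theorem padding_hierarchy_aux (A B N : ℕ) (hN : 0 < N) (an bn : ℕ)
    (ha : 1 ≤ an) (hab : an ≤ bn)
    (hA : A = (an - 1) * N + 1) (hB : B = (bn - 1) * N + 1)
    (hAB : A ≤ B) (h : Fin A → Fin N) :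
    ∃ h' : Fin B → Fin N,
      (∀ i : Fin A, h' (Fin.castLE hAB i) = h i) ∧
      ∀ s : Finset (Fin B), s.card = bn →
        ∀ y : Fin N, (∀ p ∈ s, h' p = y) →
          ∃ s' : Finset (Fin A), s'.card = an ∧
            (∀ p ∈ s', Fin.castLE hAB p ∈ s) ∧ ∀ p ∈ s', h p = y := by
  classical
  refine ⟨fun i => if hi : (i : ℕ) < A then h ⟨i, hi⟩
      else ⟨((i : ℕ) - A) % N, Nat.mod_lt _ hN⟩, ?_, ?_⟩
  · intro i
    have hi : ((Fin.castLE hAB i : Fin B) : ℕ) < A := i.isLt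
    simp only [dif_pos hi]
    exact congrArg h (Fin.ext rfl)
  · intro s hs y hy
    have hsplit : (s.filter (fun i : Fin B => (i : ℕ) < A)).card
        + (s.filter (fun i : Fin B => ¬ (i : ℕ) < A)).card = bn := by
      rw [Finset.card_filter_add_card_filter_not, hs]
    have hmul : (bn - 1) * N = (an - 1) * N + (bn - an) * N := by
      rw [← Nat.add_mul]
      congr 1
      omega
    have hsdcard : (s.filter (fun i : Fin B => ¬ (i : ℕ) < A)).card ≤ bn - an := by
      have := Finset.card_le_card_of_injOn
        (f := fun i : Fin B => ((i : ℕ) - A) / N)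
        (s := s.filter (fun i : Fin B => ¬ (i : ℕ) < A))
        (t := Finset.range (bn - an)) ?_ ?_
      · simpa using this
      · intro i hi
        rw [Finset.mem_coe, Finset.mem_filter] at hi
        have h1 : A ≤ (i : ℕ) := by omega
        have h2 : (i : ℕ) < B := i.isLt
        have h3 : (i : ℕ) - A < (bn - an) * N := by omega
        simp only [Finset.mem_coe, Finset.mem_range]
        exact Nat.div_lt_of_lt_mul (by rw [Nat.mul_comm]; exact h3)
      · intro i hi j hj hij
        simp only [Finset.mem_coe, Finset.mem_filter] at hi hj
        have hyi : ((i : ℕ) - A) % N = (y : ℕ) := by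
          have := hy i hi.1
          simp only at this
          rw [dif_neg hi.2] at this
          exact congrArg Fin.val this
        have hyj : ((j : ℕ) - A) % N = (y : ℕ) := by
          have := hy j hj.1
          simp only at this
          rw [dif_neg hj.2] at this
          exact congrArg Fin.val this
        have di := Nat.div_add_mod ((i : ℕ) - A) N
        have dj := Nat.div_add_mod ((j : ℕ) - A) N
        simp only at hij
        rw [hij] at di
        have hi1 : A ≤ (i : ℕ) := by omega
        have hj1 : A ≤ (j : ℕ) := by omega
        have : (i : ℕ) = (j : ℕ) := by omega
        exact Fin.ext this
    have hsocard : an ≤ (s.filter (fun i : Fin B => (i : ℕ) < A)).card := by omega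
    obtain ⟨t, hts, htcard⟩ := Finset.exists_subset_card_eq hsocard
    have hmem : ∀ i ∈ t, (i : ℕ) < A := by
      intro i hi
      have := hts hi
      rw [Finset.mem_filter] at this
      exact this.2
    have hmem' : ∀ i ∈ t, i ∈ s := by
      intro i hi
      have := hts hi
      rw [Finset.mem_filter] at this
      exact this.1
    refine ⟨t.attach.map ⟨fun i => (⟨(i.1 : ℕ), hmem i.1 i.2⟩ : Fin A),
        ?_⟩, ?_, ?_, ?_⟩
    · intro i j hij
      have := congrArg Fin.val hij
      simp only at this
      exact Subtype.ext (Fin.ext this)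
    · rw [Finset.card_map, Finset.card_attach, htcard]
    · intro p hp
      simp only [Finset.mem_map, Finset.mem_attach, true_and, Subtype.exists,
        Function.Embedding.coeFn_mk] at hp
      obtain ⟨i, hi, rfl⟩ := hp
      have : Fin.castLE hAB (⟨(i : ℕ), hmem i hi⟩ : Fin A) = i := Fin.ext rfl
      change Fin.castLE hAB (⟨(i : ℕ), hmem i hi⟩ : Fin A) ∈ s
      rw [this]
      exact hmem' i hi
    · intro p hp
      simp only [Finset.mem_map, Finset.mem_attach, true_and, Subtype.exists,
        Function.Embedding.coeFn_mk] at hp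
      obtain ⟨i, hi, rfl⟩ := hp
      have := hy i (hmem' i hi)
      simp only at this
      rw [dif_pos (hmem i hi)] at this
      exact this

/-- Padding argument for the pigeon hierarchy: adding `(b n - a n)·N` dummy
pigeons (each group mapped bijectively onto the holes) extends an `a(n)`-pigeon
instance `h` to a `b(n)`-pigeon instance `h'` in which every `b(n)`-collision
contains `a(n)` original pigeons with a common hole, i.e. an `a(n)`-collision
of `h`. -/
theorem padding_hierarchy (a b : ℕ → ℕ) (n N : ℕ) (hN : 1 ≤ N)
    (ha : 1 ≤ a n) (hab : a n ≤ b n)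
    (hAB : (a n - 1) * N + 1 ≤ (b n - 1) * N + 1)
    (h : Fin ((a n - 1) * N + 1) → Fin N) :
    ∃ h' : Fin ((b n - 1) * N + 1) → Fin N,
      (∀ i : Fin ((a n - 1) * N + 1), h' (Fin.castLE hAB i) = h i) ∧
      ∀ s : Finset (Fin ((b n - 1) * N + 1)), s.card = b n →
        ∀ y : Fin N, (∀ p ∈ s, h' p = y) →
          ∃ s' : Finset (Fin ((a n - 1) * N + 1)), s'.card = a n ∧
            (∀ p ∈ s', Fin.castLE hAB p ∈ s) ∧ ∀ p ∈ s', h p = y := by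
  exact padding_hierarchy_aux _ _ N hN (a n) (b n) ha hab rfl rfl hAB h
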